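/- Let (X,d) be a metric space and A ⊆ X. Then A is a Bourbaki-bounded subset of X (every uniformly continuous real-valued function on X is bounded on A) if and only if for every γ > 0 there exist M₁, M₂ ∈ ℕ and points x₁, …, x_{M₁} ∈ X such that A ⊆ {x₁, …, x_{M₁}}^{M₂, γ}, where for S ⊆ X one defines S^{1,γ} = {x ∈ X : d(x,S) ≤ γ} and inductively S^{k,γ} = {x ∈ X : d(x, S^{k-1,γ}) ≤ γ}. -/

import Mathlib

/-- The iterated `γ`-enlargements of a set: `enlarge γ S 0 = S` and
`enlarge γ S (k+1) = {x : d(x, enlarge γ S k) ≤ γ}`, where the distance to a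
set is computed in `[0,∞]` (so it is `∞` for the empty set). -/
def enlarge {X : Type*} [MetricSpace X] (γ : ℝ) (S : Set X) : ℕ → Set X
  | 0 => S
  | k + 1 => {x : X | EMetric.infEdist x (enlarge γ S k) ≤ ENNReal.ofReal γ}

open scoped ENNReal

section aux

variable {X : Type*} [MetricSpace X] {γ : ℝ} {S F : Set X}

lemma enlarge_subset_succ (hγ : 0 ≤ γ) (k : ℕ) :
    enlarge γ S k ⊆ enlarge γ S (k + 1) := by
  induction k with
  | zero =>
    intro x hx
    show EMetric.infEdist x S ≤ ENNReal.ofReal γ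
    rw [show EMetric.infEdist x S = 0 from EMetric.infEdist_zero_of_mem (show x ∈ S from hx)]
    exact zero_le
  | succ k ih =>
    intro x hx
    simp only [enlarge, Set.mem_setOf_eq] at hx ⊢
    exact le_trans (EMetric.infEdist_anti ih) hx

lemma enlarge_mono (hγ : 0 ≤ γ) {k l : ℕ} (hkl : k ≤ l) :
    enlarge γ S k ⊆ enlarge γ S l := by
  induction hkl with
  | refl => exact subset_rfl
  | step h ih => exact ih.trans (enlarge_subset_succ hγ _)

lemma mem_enlarge_succ (hγ : 0 ≤ γ) {k : ℕ} {x y : X}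
    (hy : y ∈ enlarge γ S k) (hxy : dist x y ≤ γ) :
    x ∈ enlarge γ S (k + 1) := by
  show EMetric.infEdist x (enlarge γ S k) ≤ ENNReal.ofReal γ
  calc EMetric.infEdist x (enlarge γ S k) ≤ edist x y :=
        EMetric.infEdist_le_edist_of_mem hy
    _ = ENNReal.ofReal (dist x y) := edist_dist x y
    _ ≤ ENNReal.ofReal γ := ENNReal.ofReal_le_ofReal hxy

open Classical in
noncomputable def chainCostAux (γ : ℝ) (F : Set X) : ℕ → X → ℝ≥0∞
  | 0 => fun x => if x ∈ F then 0 else ⊤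
  | k + 1 => fun x => min (chainCostAux γ F k x)
      (⨅ (y : X) (_ : dist x y ≤ γ), chainCostAux γ F k y + edist x y)

/-- The minimal total length of a `γ`-chain from `F` to `x` (infinite if none). -/
noncomputable def chainCost (γ : ℝ) (F : Set X) (x : X) : ℝ≥0∞ :=
  ⨅ k, chainCostAux γ F k x

lemma chainCost_le_add {x y : X} (hxy : dist x y ≤ γ) :
    chainCost γ F x ≤ chainCost γ F y + edist x y := by
  unfold chainCost
  rw [ENNReal.iInf_add]
  refine le_iInf fun k => ?_
  refine le_trans (iInf_le _ (k + 1)) ?_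
  exact le_trans (min_le_right _ _) (iInf₂_le y hxy)

lemma chainCost_lt_top_of_chain {b x : X} (hb : b ∈ F)
    (h : Relation.ReflTransGen (fun u v => dist u v ≤ γ) b x) :
    chainCost γ F x < ⊤ := by
  induction h with
  | refl =>
    refine lt_of_le_of_lt (iInf_le _ 0) ?_
    simp [chainCostAux, hb]
  | tail hyz hstep ih =>
    rename_i y z
    have : chainCost γ F z ≤ chainCost γ F y + edist z y :=
      chainCost_le_add (by rw [dist_comm]; exact hstep)
    exact lt_of_le_of_lt this (ENNReal.add_lt_top.2 ⟨ih, edist_lt_top z y⟩)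

/-- The key estimate: if there is a `γ`-chain of total length `< t` from `F` to `x`,
then `x` is in an iterated enlargement of `F` of order roughly `2t/γ`. -/
lemma chainCostAux_bound (hγ : 0 < γ) :
    ∀ (m : ℕ) (x : X) (t : ℝ), chainCostAux γ F m x < ENNReal.ofReal t →
      ∃ (k : ℕ) (y : X), y ∈ enlarge γ F k ∧ dist x y ≤ γ ∧
        (k : ℝ) * (γ / 2) + dist x y ≤ t + γ / 2 := by
  intro m
  induction m with
  | zero =>
    intro x t ht
    by_cases hx : x ∈ F
    · refine ⟨0, x, hx, by simp [hγ.le], ?_⟩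
      have h0 : (0 : ℝ≥0∞) < ENNReal.ofReal t := lt_of_le_of_lt zero_le ht
      have : 0 < t := ENNReal.ofReal_pos.1 h0
      simp only [Nat.cast_zero, zero_mul, dist_self, add_zero, zero_add]
      linarith
    · simp only [chainCostAux, if_neg hx] at ht
      exact absurd ht not_top_lt
  | succ m ih =>
    intro x t ht
    simp only [chainCostAux] at ht
    rcases min_lt_iff.1 ht with h | h
    · exact ih x t h
    · obtain ⟨z, hz⟩ := iInf_lt_iff.1 h
      obtain ⟨hxz, hlt⟩ := iInf_lt_iff.1 hz
      set d := dist x z with hd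
      have hd0 : 0 ≤ d := dist_nonneg
      have hdt : d < t := by
        have : ENNReal.ofReal d < ENNReal.ofReal t := by
          refine lt_of_le_of_lt ?_ hlt
          rw [edist_dist]
          exact le_add_self
        exact (ENNReal.ofReal_lt_ofReal_iff_of_nonneg hd0).1 this
      have hz' : chainCostAux γ F m z < ENNReal.ofReal (t - d) := by
        have hsplit : ENNReal.ofReal (t - d) + ENNReal.ofReal d = ENNReal.ofReal t := by
          rw [← ENNReal.ofReal_add (by linarith) hd0]
          congr 1
          ring
        rw [← (ENNReal.add_lt_add_iff_right (c := ENNReal.ofReal (t - d))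
          (a := ENNReal.ofReal d) ENNReal.ofReal_ne_top)]
        rw [hsplit]
        rwa [edist_dist] at hlt
      obtain ⟨k, y, hy, hzy, hsum⟩ := ih z (t - d) hz'
      by_cases hxy : dist x y ≤ γ
      · refine ⟨k, y, hy, hxy, ?_⟩
        have htri : dist x y ≤ d + dist z y := dist_triangle x z y
        linarith
      · push_neg at hxy
        have hzk : z ∈ enlarge γ F (k + 1) := mem_enlarge_succ hγ.le hy hzy
        have hdzy : γ < d + dist z y :=
          lt_of_lt_of_le hxy (dist_triangle x z y)
        by_cases hbig : γ / 2 ≤ dist z y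
        · refine ⟨k + 1, z, hzk, hxz, ?_⟩
          push_cast
          linarith
        · push_neg at hbig
          refine ⟨k + 2, x, mem_enlarge_succ hγ.le hzk hxz, by simp [hγ.le], ?_⟩
          push_cast
          simp only [dist_self]
          linarith

end aux

/-- `A ⊆ X` is a Bourbaki-bounded subset of `X` (every uniformly continuous
real function on `X` is bounded on `A`) iff for every `γ > 0` there are
finitely many points `x₁, …, x_{M₁}` of `X` and `M₂ ∈ ℕ` with
`A ⊆ {x₁, …, x_{M₁}}^{M₂, γ}`. -/
theorem bourbakiBoundedSubset_iff_finitely_chainable {X : Type*} [MetricSpace X] (A : Set X) :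
    (∀ f : X → ℝ, UniformContinuous f → ∃ C : ℝ, ∀ x ∈ A, |f x| ≤ C) ↔
    (∀ γ : ℝ, 0 < γ → ∃ (M₁ M₂ : ℕ) (x : Fin M₁ → X),
      A ⊆ enlarge γ (Set.range x) M₂) := by
  constructor
  · -- hard direction
    intro hbdd γ hγ
    classical
    by_contra hcon
    push_neg at hcon
    set Rel : X → X → Prop := fun u v => dist u v ≤ γ with hRel
    set Rtg : X → X → Prop := Relation.ReflTransGen Rel with hRtg
    by_cases hP : ∃ s : Finset X, ∀ a ∈ A, ∃ b ∈ s, Rtg b a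
    · -- finitely many chain components meet A: use the chain-cost function
      obtain ⟨s, hs⟩ := hP
      set F : Set X := (↑s : Set X) with hF
      set xfun : Fin s.card → X := fun i => (s.equivFin.symm i : X) with hxfun
      have hrange : Set.range xfun = F := by
        ext a
        constructor
        · rintro ⟨i, rfl⟩
          exact (s.equivFin.symm i).2
        · intro ha
          exact ⟨s.equivFin ⟨a, ha⟩, by simp [hxfun]⟩
      set f : X → ℝ := fun x => (chainCost γ F x).toReal with hf
      have huc : UniformContinuous f := by
        rw [Metric.uniformContinuous_iff]
        intro ε hε
        refine ⟨min γ ε, lt_min hγ hε, fun {a b} hab => ?_⟩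
        have habγ : dist a b ≤ γ := le_of_lt (lt_of_lt_of_le hab (min_le_left _ _))
        have h1 : chainCost γ F a ≤ chainCost γ F b + edist a b := chainCost_le_add habγ
        have h2 : chainCost γ F b ≤ chainCost γ F a + edist b a :=
          chainCost_le_add (by rwa [dist_comm])
        by_cases htop : chainCost γ F b = ⊤
        · have hatop : chainCost γ F a = ⊤ := by
            by_contra hne
            have hne' : chainCost γ F a + edist b a ≠ ⊤ :=
              ENNReal.add_ne_top.2 ⟨hne, edist_ne_top b a⟩
            rw [htop] at h2
            exact hne' (top_le_iff.1 h2)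
          have : f a = f b := by simp only [hf, htop, hatop]
          rw [this, dist_self]
          exact hε
        · have hafin : chainCost γ F a ≠ ⊤ := by
            intro hatop
            rw [hatop] at h1
            have hne' : chainCost γ F b + edist a b ≠ ⊤ :=
              ENNReal.add_ne_top.2 ⟨htop, edist_ne_top a b⟩
            exact hne' (top_le_iff.1 h1)
          have hbfin : chainCost γ F b ≠ ⊤ := htop
          have he : edist a b = ENNReal.ofReal (dist a b) := edist_dist a b
          have ha' : (chainCost γ F a).toReal ≤ (chainCost γ F b).toReal + dist a b := by
            have := ENNReal.toReal_mono (by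
              exact ENNReal.add_ne_top.2 ⟨hbfin, edist_ne_top a b⟩) h1
            rwa [ENNReal.toReal_add hbfin (edist_ne_top a b), he,
              ENNReal.toReal_ofReal dist_nonneg] at this
          have hb' : (chainCost γ F b).toReal ≤ (chainCost γ F a).toReal + dist a b := by
            have := ENNReal.toReal_mono (by
              exact ENNReal.add_ne_top.2 ⟨hafin, edist_ne_top b a⟩) h2
            rwa [ENNReal.toReal_add hafin (edist_ne_top b a), edist_dist b a,
              ENNReal.toReal_ofReal dist_nonneg, dist_comm b a] at this
          rw [Real.dist_eq]
          have : |f a - f b| ≤ dist a b := abs_sub_le_iff.2 ⟨by simp [hf]; linarith,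
            by simp [hf]; linarith⟩
          exact lt_of_le_of_lt this (lt_of_lt_of_le hab (min_le_right _ _))
      obtain ⟨C, hC⟩ := hbdd f huc
      set K : ℕ := ⌈(2 * C + 2) / γ⌉₊ + 2 with hK
      obtain ⟨a, haA, hanot⟩ := Set.not_subset.1 (hcon s.card K xfun)
      rw [hrange] at hanot
      -- a has a chain from F, so finite cost
      obtain ⟨b, hbs, hchain⟩ := hs a haA
      have hfin : chainCost γ F a < ⊤ := chainCost_lt_top_of_chain hbs hchain
      have hfC : |f a| ≤ C := hC a haA
      have hfa : f a = (chainCost γ F a).toReal := rfl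
      have hfa0 : 0 ≤ f a := ENNReal.toReal_nonneg
      have hcost : chainCost γ F a < ENNReal.ofReal (C + 1) := by
        rw [ENNReal.lt_ofReal_iff_toReal_lt hfin.ne]
        have : f a ≤ C := (abs_of_nonneg hfa0) ▸ hfC
        linarith
      obtain ⟨m, hm⟩ := iInf_lt_iff.1 hcost
      obtain ⟨k, y, hy, hay, hsum⟩ := chainCostAux_bound hγ m a (C + 1) hm
      have haK : a ∈ enlarge γ F (k + 1) := mem_enlarge_succ hγ.le hy hay
      have hkK : k + 1 ≤ K := by
        have hdy : (0:ℝ) ≤ dist a y := dist_nonneg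
        have h1 : (k : ℝ) * (γ / 2) ≤ C + 1 + γ / 2 := by linarith
        have h2 : (k : ℝ) * γ ≤ 2 * C + 2 + γ := by nlinarith
        have h2' : (k : ℝ) ≤ (2 * C + 2) / γ + 1 := by
          rw [← sub_nonneg]
          have : (2 * C + 2) / γ + 1 - k = (2 * C + 2 + γ - k * γ) / γ := by
            field_simp
          rw [this]
          exact div_nonneg (by linarith) hγ.le
        have h3 : (k : ℝ) ≤ (⌈(2 * C + 2) / γ⌉₊ : ℝ) + 1 :=
          le_trans h2' (by have := Nat.le_ceil ((2 * C + 2) / γ); linarith)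
        have h4 : k ≤ ⌈(2 * C + 2) / γ⌉₊ + 1 := by exact_mod_cast h3
        omega
      exact hanot (enlarge_mono hγ.le hkK haK)
    · -- infinitely many chain components meet A: locally constant unbounded function
      push_neg at hP
      have hseq : ∀ t : Finset X, (∀ x ∈ t, x ∈ A) →
          ∃ y, y ∈ A ∧ ∀ x ∈ t, ¬ Rtg x y := by
        intro t _
        have := hP t
        obtain ⟨a, haA, ha⟩ := this
        exact ⟨a, haA, fun x hx => ha x hx⟩
      obtain ⟨u, huA, hune⟩ := exists_seq_of_forall_finset_exists (· ∈ A)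
        (fun x y => ¬ Rtg x y) hseq
      set f : X → ℝ := fun x => if h : ∃ n, Rtg (u n) x then (Nat.find h : ℝ) else 0 with hf
      have hcong : ∀ x y : X, dist x y ≤ γ → f x = f y := by
        intro x y hxy
        have hiff : ∀ n, Rtg (u n) x ↔ Rtg (u n) y := by
          intro n
          constructor
          · intro h; exact h.tail hxy
          · intro h; exact h.tail (show dist y x ≤ γ by rwa [dist_comm])
        simp only [hf]
        by_cases hx : ∃ n, Rtg (u n) x
        · have hy : ∃ n, Rtg (u n) y := ⟨Nat.find hx, (hiff _).1 (Nat.find_spec hx)⟩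
          rw [dif_pos hx, dif_pos hy]
          congr 1
          exact le_antisymm (Nat.find_le ((hiff _).2 (Nat.find_spec hy)))
            (Nat.find_le ((hiff _).1 (Nat.find_spec hx)))
        · have hy : ¬ ∃ n, Rtg (u n) y := by
            rintro ⟨n, hn⟩
            exact hx ⟨n, (hiff n).2 hn⟩
          rw [dif_neg hx, dif_neg hy]
      have huc : UniformContinuous f := by
        rw [Metric.uniformContinuous_iff]
        intro ε hε
        refine ⟨γ, hγ, fun {a b} hab => ?_⟩
        rw [hcong a b hab.le]
        simpa using hε
      obtain ⟨C, hC⟩ := hbdd f huc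
      obtain ⟨n, hn⟩ := exists_nat_gt C
      have hfn : f (u n) = n := by
        have hex : ∃ m, Rtg (u m) (u n) := ⟨n, Relation.ReflTransGen.refl⟩
        simp only [hf, dif_pos hex]
        norm_cast
        have h1 : Nat.find hex ≤ n := Nat.find_le Relation.ReflTransGen.refl
        rcases lt_or_eq_of_le h1 with h | h
        · exact absurd (Nat.find_spec hex) (hune _ _ h)
        · exact h
      have := hC (u n) (huA n)
      rw [hfn] at this
      have : (n : ℝ) ≤ C := le_trans (le_abs_self _) this
      linarith
  · -- easy direction
    intro hch f hf
    rw [Metric.uniformContinuous_iff] at hf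
    obtain ⟨δ, hδ, hfδ⟩ := hf 1 one_pos
    obtain ⟨M₁, M₂, x, hx⟩ := hch (δ / 2) (by linarith)
    obtain ⟨C₀, hC₀⟩ : ∃ C₀, ∀ i : Fin M₁, |f (x i)| ≤ C₀ := by
      rcases isEmpty_or_nonempty (Fin M₁) with h | h
      · exact ⟨0, fun i => (h.false i).elim⟩
      · obtain ⟨C₀, hC₀⟩ := (Set.finite_range fun i => |f (x i)|).bddAbove
        exact ⟨C₀, fun i => hC₀ ⟨i, rfl⟩⟩
    have key : ∀ k : ℕ, ∀ z ∈ enlarge (δ / 2) (Set.range x) k, |f z| ≤ C₀ + k := by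
      intro k
      induction k with
      | zero =>
        rintro z ⟨i, rfl⟩
        simpa using hC₀ i
      | succ k ih =>
        intro z hz
        have hz' : EMetric.infEdist z (enlarge (δ / 2) (Set.range x) k) <
            ENNReal.ofReal δ := by
          refine lt_of_le_of_lt hz ?_
          exact ENNReal.ofReal_lt_ofReal_iff hδ |>.2 (by linarith)
        obtain ⟨y, hy, hey⟩ := EMetric.infEdist_lt_iff.1 hz'
        have hdzy : dist z y < δ := edist_lt_ofReal.1 hey
        have := hfδ hdzy
        rw [Real.dist_eq] at this
        have hyb := ih y hy
        calc |f z| = |f y + (f z - f y)| := by ring_nf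
          _ ≤ |f y| + |f z - f y| := abs_add_le _ _
          _ ≤ (C₀ + k) + 1 := add_le_add hyb this.le
          _ = C₀ + (k + 1 : ℕ) := by push_cast; ring
    exact ⟨C₀ + M₂, fun z hz => key M₂ z (hx hz)⟩
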